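/- For all positive integers r and s with gcd(r,s) = 1 and rs > 1, the mean value M(c*(·,r) c*(·,s)) of the function n ↦ c*(n,r) c*(n,s) exists and equals 0. -/

import Mathlib

open Finset Filter Topology

/-- The unitary gcd `(n,r)_U`: the largest `d` with `d ∣ n`, `d ∣ r` and `gcd(d, r/d) = 1`. -/
def unitaryGcd (n r : ℕ) : ℕ :=
  (r.divisors.filter (fun d => d ∣ n ∧ Nat.Coprime d (r / d))).sup id

lemma unitaryGcd_self {r : ℕ} (hr : 0 < r) : unitaryGcd r r = r := by
  unfold unitaryGcd
  apply le_antisymm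
  · exact Finset.sup_le fun d hd =>
      Nat.le_of_dvd hr (Nat.mem_divisors.mp (Finset.mem_filter.mp hd).1).1
  · apply Finset.le_sup (f := id) (b := r)
    simp [Nat.mem_divisors, hr.ne', Nat.div_self hr]

lemma geom_bound (q : ℂ) (hq : q ≠ 1) (h1 : ‖q‖ = 1) (N : ℕ) :
    ‖∑ n ∈ Finset.Icc 1 N, q ^ n‖ ≤ 2 / ‖q - 1‖ := by
  have hq0 : ‖q - 1‖ > 0 := by
    simpa [sub_eq_zero] using hq
  have hsum : ∑ n ∈ Finset.Icc 1 N, q ^ n = q * ((q ^ N - 1) / (q - 1)) := by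
    rw [← Finset.Ico_add_one_right_eq_Icc, Finset.sum_Ico_eq_sum_range]
    simp only [Nat.add_sub_cancel, pow_add, pow_one]
    rw [← Finset.mul_sum, geom_sum_eq hq]
  rw [hsum, norm_mul, h1, one_mul, norm_div]
  gcongr
  calc ‖q ^ N - 1‖ ≤ ‖q ^ N‖ + ‖(1 : ℂ)‖ := norm_sub_le _ _
    _ = 2 := by rw [norm_pow, h1]; norm_num

lemma q_ne_one (r s k l : ℕ) (hr : 0 < r) (hs : 0 < s) (hrs : Nat.gcd r s = 1)
    (h1 : 1 < r * s) (hk1 : 1 ≤ k) (hk2 : k ≤ r) (hk3 : unitaryGcd k r = 1)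
    (hl1 : 1 ≤ l) (hl2 : l ≤ s) (hl3 : unitaryGcd l s = 1) :
    Complex.exp (2 * Real.pi * Complex.I * ((k * s + l * r : ℕ) : ℂ) / ((r * s : ℕ) : ℂ)) ≠ 1 := by
  intro h
  rw [Complex.exp_eq_one_iff] at h
  obtain ⟨m, hm⟩ := h
  have h2 : (2 * (Real.pi : ℂ) * Complex.I) ≠ 0 := by
    simp [Real.pi_ne_zero, Complex.I_ne_zero]
  have hY : ((r * s : ℕ) : ℂ) ≠ 0 := Nat.cast_ne_zero.mpr (by positivity)
  have hXY : ((k * s + l * r : ℕ) : ℂ) = (m : ℂ) * ((r * s : ℕ) : ℂ) := by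
    have h' : 2 * (Real.pi : ℂ) * Complex.I * ((k * s + l * r : ℕ) : ℂ)
        = 2 * (Real.pi : ℂ) * Complex.I * ((m : ℂ) * ((r * s : ℕ) : ℂ)) := by
      have hr0 : (r : ℂ) ≠ 0 := Nat.cast_ne_zero.mpr hr.ne'
      have hs0 : (s : ℂ) ≠ 0 := Nat.cast_ne_zero.mpr hs.ne'
      push_cast at hm ⊢
      field_simp at hm
      linear_combination (2 * (Real.pi : ℂ) * Complex.I) * hm
    exact mul_left_cancel₀ h2 h'
  have hZ : ((k * s + l * r : ℕ) : ℤ) = m * ((r * s : ℕ) : ℤ) := by exact_mod_cast hXY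
  have hdvd : (r * s : ℕ) ∣ (k * s + l * r) := by
    have : ((r * s : ℕ) : ℤ) ∣ ((k * s + l * r : ℕ) : ℤ) := ⟨m, by rw [hZ]; ring⟩
    exact_mod_cast this
  have hrk : r ∣ k := by
    have h3 : r ∣ k * s + l * r := (dvd_mul_right r s).trans hdvd
    have h4 : r ∣ k * s := (Nat.dvd_add_iff_left (dvd_mul_left r l)).mpr h3
    exact (Nat.Coprime.dvd_of_dvd_mul_right hrs h4)
  have hsl : s ∣ l := by
    have h3 : s ∣ k * s + l * r := (dvd_mul_left s r).trans hdvd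
    have h4 : s ∣ l * r := (Nat.dvd_add_iff_right (dvd_mul_left s k)).mpr h3
    exact (Nat.Coprime.dvd_of_dvd_mul_right (Nat.coprime_comm.mp hrs) h4)
  have hkr : k = r := Nat.le_antisymm hk2 (Nat.le_of_dvd hk1 hrk)
  have hls : l = s := Nat.le_antisymm hl2 (Nat.le_of_dvd hl1 hsl)
  rw [hkr, unitaryGcd_self hr] at hk3
  rw [hls, unitaryGcd_self hs] at hl3
  rw [hk3, hl3] at h1
  norm_num at h1

/-- The unitary Ramanujan sum `c*(n,r) = ∑_{1 ≤ k ≤ r, (k,r)_U = 1} exp(2πikn/r)`. -/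
noncomputable def unitaryRamanujanSum (n r : ℕ) : ℂ :=
  ∑ k ∈ (Finset.Icc 1 r).filter (fun k => unitaryGcd k r = 1),
    Complex.exp (2 * Real.pi * Complex.I * k * n / r)

/-- For coprime `r, s` with `rs > 1`, the mean value of `n ↦ c*(n,r) c*(n,s)` exists
and equals `0`. -/
theorem unitaryRamanujanSum_coprime_orthogonal (r s : ℕ) (hr : 0 < r) (hs : 0 < s)
    (hrs : Nat.gcd r s = 1) (h1 : 1 < r * s) :
    Tendsto
      (fun x : ℝ =>
        (∑ n ∈ Finset.Icc 1 ⌊x⌋₊, unitaryRamanujanSum n r * unitaryRamanujanSum n s) / (x : ℂ))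
      atTop (𝓝 0) := by
  classical
  set A := (Finset.Icc 1 r).filter (fun k => unitaryGcd k r = 1) with hA
  set B := (Finset.Icc 1 s).filter (fun k => unitaryGcd k s = 1) with hB
  set q : ℕ → ℕ → ℂ := fun k l =>
    Complex.exp (2 * Real.pi * Complex.I * ((k * s + l * r : ℕ) : ℂ) / ((r * s : ℕ) : ℂ)) with hq
  have hr0 : (r : ℂ) ≠ 0 := Nat.cast_ne_zero.mpr hr.ne'
  have hs0 : (s : ℂ) ≠ 0 := Nat.cast_ne_zero.mpr hs.ne'
  have hqne : ∀ k ∈ A, ∀ l ∈ B, q k l ≠ 1 := by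
    intro k hk l hl
    simp only [hA, Finset.mem_filter, Finset.mem_Icc] at hk
    simp only [hB, Finset.mem_filter, Finset.mem_Icc] at hl
    exact q_ne_one r s k l hr hs hrs h1 hk.1.1 hk.1.2 hk.2 hl.1.1 hl.1.2 hl.2
  have hqabs : ∀ k l, ‖q k l‖ = 1 := by
    intro k l
    have : 2 * (Real.pi : ℂ) * Complex.I * ((k * s + l * r : ℕ) : ℂ) / ((r * s : ℕ) : ℂ)
        = ((2 * Real.pi * (k * s + l * r : ℕ) / (r * s : ℕ) : ℝ) : ℂ) * Complex.I := by
      push_cast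
      ring
    rw [hq]
    simp only [this]
    rw [Complex.norm_exp_ofReal_mul_I]
  -- rewrite each term as a double sum of powers
  have hterm : ∀ n : ℕ, unitaryRamanujanSum n r * unitaryRamanujanSum n s
      = ∑ k ∈ A, ∑ l ∈ B, (q k l) ^ n := by
    intro n
    rw [unitaryRamanujanSum, unitaryRamanujanSum, Finset.sum_mul_sum]
    refine Finset.sum_congr rfl fun k hk => Finset.sum_congr rfl fun l hl => ?_
    rw [hq, ← Complex.exp_add, ← Complex.exp_nat_mul]
    congr 1
    push_cast
    field_simp
  set C : ℝ := ∑ k ∈ A, ∑ l ∈ B, 2 / ‖q k l - 1‖ with hC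
  have hbound : ∀ N : ℕ,
      ‖∑ n ∈ Finset.Icc 1 N, unitaryRamanujanSum n r * unitaryRamanujanSum n s‖ ≤ C := by
    intro N
    have : ∑ n ∈ Finset.Icc 1 N, unitaryRamanujanSum n r * unitaryRamanujanSum n s
        = ∑ k ∈ A, ∑ l ∈ B, ∑ n ∈ Finset.Icc 1 N, (q k l) ^ n := by
      simp only [hterm]
      rw [Finset.sum_comm]
      exact Finset.sum_congr rfl fun k _ => Finset.sum_comm
    rw [this, hC]
    refine (norm_sum_le _ _).trans (Finset.sum_le_sum fun k hk => ?_)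
    refine (norm_sum_le _ _).trans (Finset.sum_le_sum fun l hl => ?_)
    exact geom_bound (q k l) (hqne k hk l hl) (hqabs k l) N
  have hC0 : 0 ≤ C := by
    rw [hC]
    refine Finset.sum_nonneg fun k _ => Finset.sum_nonneg fun l _ => by positivity
  refine squeeze_zero_norm' ?_ (Tendsto.div_atTop (tendsto_const_nhds (x := C)) tendsto_id)
  filter_upwards [eventually_ge_atTop (1 : ℝ)] with x hx
  have hx0 : (0 : ℝ) < x := by linarith
  rw [norm_div, Complex.norm_real, Real.norm_of_nonneg hx0.le]
  have := hbound ⌊x⌋₊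
  calc ‖∑ n ∈ Finset.Icc 1 ⌊x⌋₊, unitaryRamanujanSum n r * unitaryRamanujanSum n s‖ / x
      ≤ C / x := by gcongr
    _ ≤ C / id x := le_of_eq rfl
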